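/- arXiv:1810.04316 — 4 statements merged into one kernel-verified Lean document; each statement's English description precedes it below -/
import Mathlib

section
/- Let f : ℝⁿ → ℝ be convex and differentiable with gradient f′, and suppose f(y) ≤ f(x) + ⟨f′(x), y - x⟩ + (L/2)‖x - y‖² for all x, y. Then f(x) + ⟨f′(x), y - x⟩ + (1/(2L))‖f′(x) - f′(y)‖² ≤ f(y) for all x, y ∈ ℝⁿ. -/
theorem ineq1_implies_ineq2 (n : ℕ)
    (f : EuclideanSpace ℝ (Fin n) → ℝ) (f' : EuclideanSpace ℝ (Fin n) → EuclideanSpace ℝ (Fin n))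
    (L : ℝ) (hL : 0 < L)
    (hdiff : ∀ x, HasGradientAt f (f' x) x)
    (hconv : ∀ x y, f x + inner ℝ (f' x) (y - x) ≤ f y)
    (h1 : ∀ x y, f y ≤ f x + inner ℝ (f' x) (y - x) + L / 2 * ‖x - y‖ ^ 2) :
    ∀ x y : EuclideanSpace ℝ (Fin n),
      f x + inner ℝ (f' x) (y - x) + 1 / (2 * L) * ‖f' x - f' y‖ ^ 2 ≤ f y := by
  intro x y
  set g : EuclideanSpace ℝ (Fin n) := f' y - f' x with hg
  set z : EuclideanSpace ℝ (Fin n) := y - (1 / L) • g with hz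
  have hA := hconv x z
  have hB := h1 y z
  have hzx : (inner ℝ (f' x) (z - x) : ℝ)
      = inner ℝ (f' x) (y - x) - (1 / L) * inner ℝ (f' x) g := by
    have : z - x = (y - x) - (1 / L) • g := by
      rw [hz]; abel
    rw [this, inner_sub_right, real_inner_smul_right]
  have hzy : (inner ℝ (f' y) (z - y) : ℝ) = -((1 / L) * inner ℝ (f' y) g) := by
    have : z - y = -((1 / L) • g) := by rw [hz]; abel
    rw [this, inner_neg_right, real_inner_smul_right]
  have hnorm : ‖y - z‖ ^ 2 = (1 / L) ^ 2 * ‖g‖ ^ 2 := by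
    have : y - z = (1 / L) • g := by rw [hz]; abel
    rw [this, norm_smul]
    simp [mul_pow, abs_of_pos (one_div_pos.mpr hL)]
  have hgg : (inner ℝ (f' y) g : ℝ) - inner ℝ (f' x) g = ‖g‖ ^ 2 := by
    rw [← inner_sub_left, ← hg, real_inner_self_eq_norm_sq]
  have hns : ‖f' x - f' y‖ = ‖g‖ := by rw [hg, norm_sub_rev]
  rw [hns]
  rw [hzx] at hA
  rw [hzy, hnorm] at hB
  have hL' : L ≠ 0 := ne_of_gt hL
  have hmul : (1 / L) * ((inner ℝ (f' y) g : ℝ) - inner ℝ (f' x) g) = (1 / L) * ‖g‖ ^ 2 := by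
    rw [hgg]
  have hq : L / 2 * ((1 / L) ^ 2 * ‖g‖ ^ 2) = 1 / (2 * L) * ‖g‖ ^ 2 := by
    field_simp
  have heq : 1 / L * ‖g‖ ^ 2 = 2 * (1 / (2 * L) * ‖g‖ ^ 2) := by
    field_simp
  linarith [hA, hB, hmul, hq, heq]
end

section
/- Let f : ℝⁿ → ℝ be continuous and differentiable with gradient f′, and suppose α f(x) + (1-α) f(y) ≤ f(αx + (1-α)y) + α(1-α)(L/2)‖x - y‖² for all x, y ∈ ℝⁿ and α ∈ [0,1]. Then f(y) ≤ f(x) + ⟨f′(x), y - x⟩ + (L/2)‖x - y‖² for all x, y ∈ ℝⁿ. -/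
theorem ineq6_implies_ineq1 (n : ℕ)
    (f : EuclideanSpace ℝ (Fin n) → ℝ) (f' : EuclideanSpace ℝ (Fin n) → EuclideanSpace ℝ (Fin n))
    (L : ℝ) (hL : 0 < L)
    (hcont : Continuous f)
    (hdiff : ∀ x, HasGradientAt f (f' x) x)
    (h6 : ∀ x y : EuclideanSpace ℝ (Fin n), ∀ α : ℝ, 0 ≤ α → α ≤ 1 →
      α * f x + (1 - α) * f y
        ≤ f (α • x + (1 - α) • y) + α * (1 - α) * (L / 2) * ‖x - y‖ ^ 2) :
    ∀ x y : EuclideanSpace ℝ (Fin n),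
      f y ≤ f x + inner ℝ (f' x) (y - x) + L / 2 * ‖x - y‖ ^ 2 := by
  intro x y
  set v := y - x with hv
  set g : ℝ → ℝ := fun t => f (x + t • v) with hg
  have hderiv : HasDerivAt g (inner ℝ (f' x) v) 0 := by
    have h1 : HasDerivAt (fun t : ℝ => x + t • v) v 0 := by
      simpa using ((hasDerivAt_id (0:ℝ)).smul_const v).const_add x
    have h2 : HasFDerivAt f ((InnerProductSpace.toDual ℝ _) (f' x)) x := hdiff x
    have h2' : HasFDerivAt f ((InnerProductSpace.toDual ℝ _) (f' x)) ((fun t : ℝ => x + t • v) 0) := by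
      simpa using h2
    have := h2'.comp_hasDerivAt 0 h1
    simp at this
    exact this
  have hslope : Filter.Tendsto (slope g 0) (nhdsWithin 0 (Set.Ioi 0)) (nhds (inner ℝ (f' x) v)) :=
    (hasDerivAt_iff_tendsto_slope.mp hderiv).mono_left
      (nhdsWithin_mono 0 (fun t ht => ne_of_gt ht))
  have hrest : Filter.Tendsto (fun α : ℝ => (1 - α) * (L / 2) * ‖x - y‖ ^ 2)
      (nhdsWithin 0 (Set.Ioi 0)) (nhds ((1 - 0) * (L / 2) * ‖x - y‖ ^ 2)) := by
    apply Filter.Tendsto.mono_left _ nhdsWithin_le_nhds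
    exact (((continuous_const.sub continuous_id).mul continuous_const).mul
      continuous_const).tendsto 0
  have htend : Filter.Tendsto (fun α : ℝ => slope g 0 α + (1 - α) * (L / 2) * ‖x - y‖ ^ 2)
      (nhdsWithin 0 (Set.Ioi 0)) (nhds (inner ℝ (f' x) v + L / 2 * ‖x - y‖ ^ 2)) := by
    have := hslope.add hrest
    simpa [mul_comm, mul_assoc] using this
  have hev : ∀ᶠ α : ℝ in nhdsWithin 0 (Set.Ioi 0),
      f y - f x ≤ slope g 0 α + (1 - α) * (L / 2) * ‖x - y‖ ^ 2 := by
    filter_upwards [Ioc_mem_nhdsGT_of_mem (Set.left_mem_Ico.mpr one_pos)] with α hα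
    obtain ⟨hα0, hα1⟩ := hα
    have key := h6 y x α (le_of_lt hα0) hα1
    have hpt : α • y + (1 - α) • x = x + α • v := by
      rw [hv]; rw [smul_sub, sub_smul, one_smul]
      abel
    rw [hpt] at key
    have hnorm : ‖y - x‖ = ‖x - y‖ := norm_sub_rev _ _
    rw [hnorm] at key
    have hs : slope g 0 α = (f (x + α • v) - f x) / α := by
      simp [slope_def_field, hg]
    rw [hs]
    rw [div_add' _ _ _ (ne_of_gt hα0), le_div_iff₀ hα0]
    nlinarith [key]
  have := ge_of_tendsto htend hev
  have hfin : f y - f x ≤ inner ℝ (f' x) v + L / 2 * ‖x - y‖ ^ 2 := this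
  linarith [hfin]
end

section
/- Let f : ℝⁿ → ℝ be differentiable with gradient f′ satisfying f(x) + ⟨f′(x), y - x⟩ + (1/(2L))‖f′(x) - f′(y)‖² ≤ f(y) for all x, y. Then for all x, y ∈ ℝⁿ and α ∈ [0,1]: f(αx + (1-α)y) + (α(1-α)/(2L))‖f′(x) - f′(y)‖² ≤ α f(x) + (1-α) f(y). -/
theorem ineq2_implies_ineq5 (n : ℕ)
    (f : EuclideanSpace ℝ (Fin n) → ℝ) (f' : EuclideanSpace ℝ (Fin n) → EuclideanSpace ℝ (Fin n))
    (L : ℝ) (hL : 0 < L)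
    (hdiff : ∀ x, HasGradientAt f (f' x) x)
    (h2 : ∀ x y, f x + inner ℝ (f' x) (y - x) + 1 / (2 * L) * ‖f' x - f' y‖ ^ 2 ≤ f y) :
    ∀ x y : EuclideanSpace ℝ (Fin n), ∀ α : ℝ, 0 ≤ α → α ≤ 1 →
      f (α • x + (1 - α) • y) + α * (1 - α) / (2 * L) * ‖f' x - f' y‖ ^ 2
        ≤ α * f x + (1 - α) * f y := by
  intro x y α hα0 hα1
  set z := α • x + (1 - α) • y with hz
  have hx := h2 z x
  have hy := h2 z y
  -- the convex combination of the linear terms vanishes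
  have hlin : α * (inner ℝ (f' z) (x - z) : ℝ) + (1 - α) * (inner ℝ (f' z) (y - z) : ℝ) = 0 := by
    have : α * (inner ℝ (f' z) (x - z) : ℝ) + (1 - α) * (inner ℝ (f' z) (y - z) : ℝ)
        = inner ℝ (f' z) (α • (x - z) + (1 - α) • (y - z)) := by
      rw [inner_add_right, real_inner_smul_right, real_inner_smul_right]
    rw [this]
    have h0 : α • (x - z) + (1 - α) • (y - z) = 0 := by
      rw [hz]; module
    rw [h0, inner_zero_right]
  -- key norm inequality
  set u := f' x - f' z with hu
  set v := f' y - f' z with hv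
  have huv : f' x - f' y = u - v := by rw [hu, hv]; abel
  have hkey : α * (1 - α) * ‖u - v‖ ^ 2 ≤ α * ‖u‖ ^ 2 + (1 - α) * ‖v‖ ^ 2 := by
    have e1 : ‖u - v‖ ^ 2 = ‖u‖ ^ 2 - 2 * inner ℝ u v + ‖v‖ ^ 2 := norm_sub_sq_real u v
    have e2 : ‖α • u + (1 - α) • v‖ ^ 2
        = α ^ 2 * ‖u‖ ^ 2 + 2 * (α * (1 - α)) * inner ℝ u v + (1 - α) ^ 2 * ‖v‖ ^ 2 := by
      rw [norm_add_sq_real, real_inner_smul_left, real_inner_smul_right,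
        norm_smul, norm_smul]
      rw [Real.norm_eq_abs, Real.norm_eq_abs, abs_of_nonneg hα0,
        abs_of_nonneg (by linarith : (0:ℝ) ≤ 1 - α)]
      ring
    nlinarith [sq_nonneg ‖α • u + (1 - α) • v‖]
  have hsym1 : ‖f' z - f' x‖ = ‖u‖ := by rw [hu, norm_sub_rev]
  have hsym2 : ‖f' z - f' y‖ = ‖v‖ := by rw [hv, norm_sub_rev]
  rw [hsym1] at hx
  rw [hsym2] at hy
  rw [huv]
  have hg : α * (1 - α) / (2 * L) * ‖u - v‖ ^ 2
      = 1 / (2 * L) * (α * (1 - α) * ‖u - v‖ ^ 2) := by ring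
  rw [hg]
  have hc : (0:ℝ) ≤ 1 / (2 * L) := by positivity
  have hxα := mul_le_mul_of_nonneg_left hx hα0
  have hyα := mul_le_mul_of_nonneg_left hy (by linarith : (0:ℝ) ≤ 1 - α)
  have hA := mul_le_mul_of_nonneg_left hkey hc
  nlinarith [hxα, hyα, hA, hlin]
end

section
/- Nesterov's equivalence theorem: let f : ℝⁿ → ℝ be convex and continuously differentiable with gradient f′ and let L > 0. Then the following are equivalent: (0) f′ is L-Lipschitz; (1) f(y) ≤ f(x) + ⟨f′(x), y-x⟩ + (L/2)‖x-y‖² for all x,y; (2) f(x) + ⟨f′(x), y-x⟩ + (1/(2L))‖f′(x)-f′(y)‖² ≤ f(y) for all x,y; (3) (1/L)‖f′(x)-f′(y)‖² ≤ ⟨f′(x)-f′(y), x-y⟩ for all x,y; (4) ⟨f′(x)-f′(y), x-y⟩ ≤ L‖x-y‖² for all x,y; (5) f(αx+(1-α)y) + (α(1-α)/(2L))‖f′(x)-f′(y)‖² ≤ αf(x)+(1-α)f(y) for all x,y and α∈[0,1]; (6) αf(x)+(1-α)f(y) ≤ f(αx+(1-α)y) + α(1-α)(L/2)‖x-y‖²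 for all x,y and α∈[0,1]. -/
open InnerProductSpace intervalIntegral Set Topology

lemma lineDeriv' {n : ℕ} (f : EuclideanSpace ℝ (Fin n) → ℝ)
    (f' : EuclideanSpace ℝ (Fin n) → EuclideanSpace ℝ (Fin n))
    (hdiff : ∀ x, HasGradientAt f (f' x) x)
    (x v : EuclideanSpace ℝ (Fin n)) (t : ℝ) :
    HasDerivAt (fun s : ℝ => f (x + s • v)) (inner ℝ (f' (x + t • v)) v : ℝ) t := by
  have hc : HasDerivAt (fun s : ℝ => x + s • v) v t := by
    simpa using ((hasDerivAt_id t).smul_const v).const_add x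
  have := ((hdiff (x + t • v)).hasFDerivAt).comp_hasDerivAt t hc
  exact this

lemma deriv_le_slope (g : ℝ → ℝ) (d C D : ℝ) (hg : HasDerivAt g d 0)
    (h : ∀ t ∈ Set.Ioc (0:ℝ) 1, g t - g 0 ≤ t * C + t ^ 2 * D) : d ≤ C := by
  have h1 : Filter.Tendsto (slope g 0) (𝓝[>] 0) (𝓝 d) :=
    (hasDerivAt_iff_tendsto_slope.mp hg).mono_left (nhdsWithin_mono _ (fun t ht => ht.ne'))
  have h2 : Filter.Tendsto (fun t : ℝ => C + t * D) (𝓝[>] 0) (𝓝 C) := by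
    have : Filter.Tendsto (fun t : ℝ => C + t * D) (𝓝 0) (𝓝 (C + 0 * D)) :=
      (continuous_const.add (continuous_id.mul continuous_const)).tendsto 0
    simpa using this.mono_left nhdsWithin_le_nhds
  refine le_of_tendsto_of_tendsto h1 h2 ?_
  filter_upwards [Ioc_mem_nhdsGT_of_mem (by norm_num : (0:ℝ) ∈ Ico (0:ℝ) 1)] with t ht
  have ht0 : 0 < t := ht.1
  have h3 := h t ht
  have : slope g 0 t = (g t - g 0) / t := by rw [slope_def_field]; ring_nf
  rw [this]
  rw [div_le_iff₀ ht0]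
  calc g t - g 0 ≤ t * C + t ^ 2 * D := h3
    _ = (C + t * D) * t := by ring

-- integral bound: if the directional increment of f' is bounded, get the descent lemma
lemma descent_of_bound {n : ℕ} (f : EuclideanSpace ℝ (Fin n) → ℝ)
    (f' : EuclideanSpace ℝ (Fin n) → EuclideanSpace ℝ (Fin n))
    (hdiff : ∀ x, HasGradientAt f (f' x) x) (hcont : Continuous f')
    (L : ℝ) (x y : EuclideanSpace ℝ (Fin n))
    (hb : ∀ t ∈ Set.Icc (0:ℝ) 1,
      (inner ℝ (f' (x + t • (y - x)) - f' x) (y - x) : ℝ) ≤ L * t * ‖y - x‖ ^ 2) :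
    f y ≤ f x + inner ℝ (f' x) (y - x) + L / 2 * ‖x - y‖ ^ 2 := by
  set v := y - x with hv
  have hderiv : ∀ t ∈ Set.uIcc (0:ℝ) 1,
      HasDerivAt (fun s : ℝ => f (x + s • v)) (inner ℝ (f' (x + t • v)) v : ℝ) t :=
    fun t _ => lineDeriv' f f' hdiff x v t
  have hci : Continuous fun t : ℝ => (inner ℝ (f' (x + t • v)) v : ℝ) := by
    apply Continuous.inner
    · exact hcont.comp (continuous_const.add (continuous_id.smul continuous_const))
    · exact continuous_const
  have hint := intervalIntegral.integral_eq_sub_of_hasDerivAt hderiv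
    (hci.intervalIntegrable 0 1)
  have h01 : f (x + (1:ℝ) • v) - f (x + (0:ℝ) • v) = f y - f x := by simp [hv]
  rw [h01] at hint
  -- bound the integral
  have hmono : (∫ t in (0:ℝ)..1, (inner ℝ (f' (x + t • v)) v : ℝ))
      ≤ ∫ t in (0:ℝ)..1, (inner ℝ (f' x) v + L * t * ‖v‖ ^ 2 : ℝ) := by
    apply intervalIntegral.integral_mono_on (by norm_num)
      (hci.intervalIntegrable 0 1)
      (Continuous.intervalIntegrable (by fun_prop) 0 1)
    intro t ht
    have := hb t ht
    rw [inner_sub_left] at this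
    linarith
  have hval : (∫ t in (0:ℝ)..1, (inner ℝ (f' x) v + L * t * ‖v‖ ^ 2 : ℝ))
      = inner ℝ (f' x) v + L / 2 * ‖v‖ ^ 2 := by
    rw [intervalIntegral.integral_add (intervalIntegrable_const)
      (Continuous.intervalIntegrable (by fun_prop) 0 1)]
    have : (∫ t in (0:ℝ)..1, (L * t * ‖v‖ ^ 2 : ℝ))
        = L * ‖v‖ ^ 2 * ∫ t in (0:ℝ)..1, t := by
      rw [← intervalIntegral.integral_const_mul]
      congr 1; ext t; ring
    rw [this]
    simp [_root_.integral_id]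
    ring
  have hnorm : ‖v‖ = ‖x - y‖ := by rw [hv, norm_sub_rev]
  rw [hval] at hmono
  rw [hint] at hmono
  rw [← hnorm]
  linarith

lemma grad_ineq {n : ℕ} (f : EuclideanSpace ℝ (Fin n) → ℝ)
    (f' : EuclideanSpace ℝ (Fin n) → EuclideanSpace ℝ (Fin n))
    (hdiff : ∀ x, HasGradientAt f (f' x) x)
    (hconv : ∀ x y : EuclideanSpace ℝ (Fin n), ∀ α : ℝ, 0 ≤ α → α ≤ 1 →
      f (α • x + (1 - α) • y) ≤ α * f x + (1 - α) * f y)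
    (x y : EuclideanSpace ℝ (Fin n)) :
    f x + inner ℝ (f' x) (y - x) ≤ f y := by
  have hd : HasDerivAt (fun s : ℝ => f (x + s • (y - x))) (inner ℝ (f' x) (y - x) : ℝ) 0 := by
    have := lineDeriv' f f' hdiff x (y - x) 0
    simpa using this
  have key := deriv_le_slope (fun s : ℝ => f (x + s • (y - x))) _ (f y - f x) 0 hd ?_
  · linarith
  · intro t ht
    have hline : x + t • (y - x) = t • y + (1 - t) • x := by module
    have := hconv y x t (le_of_lt ht.1) ht.2
    have h0 : x + (0:ℝ) • (y - x) = x := by module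
    simp only [hline, h0]
    nlinarith [this]

lemma norm_smul_sq {n : ℕ} (c : ℝ) (v : EuclideanSpace ℝ (Fin n)) :
    ‖c • v‖ ^ 2 = c ^ 2 * ‖v‖ ^ 2 := by
  rw [norm_smul, mul_pow, Real.norm_eq_abs, sq_abs]

set_option maxHeartbeats 1000000 in
theorem nesterov (n : ℕ)
    (f : EuclideanSpace ℝ (Fin n) → ℝ) (f' : EuclideanSpace ℝ (Fin n) → EuclideanSpace ℝ (Fin n))
    (L : ℝ) (hL : 0 < L)
    (hdiff : ∀ x, HasGradientAt f (f' x) x)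
    (hcont : Continuous f') (hfcont : Continuous f)
    (hconv : ∀ x y : EuclideanSpace ℝ (Fin n), ∀ α : ℝ, 0 ≤ α → α ≤ 1 →
      f (α • x + (1 - α) • y) ≤ α * f x + (1 - α) * f y) :
    [ (∀ x y : EuclideanSpace ℝ (Fin n), ‖f' x - f' y‖ ≤ L * ‖x - y‖),
      (∀ x y : EuclideanSpace ℝ (Fin n),
        f y ≤ f x + inner ℝ (f' x) (y - x) + L / 2 * ‖x - y‖ ^ 2),
      (∀ x y : EuclideanSpace ℝ (Fin n),
        f x + inner ℝ (f' x) (y - x) + 1 / (2 * L) * ‖f' x - f' y‖ ^ 2 ≤ f y),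
      (∀ x y : EuclideanSpace ℝ (Fin n),
        1 / L * ‖f' x - f' y‖ ^ 2 ≤ inner ℝ (f' x - f' y) (x - y)),
      (∀ x y : EuclideanSpace ℝ (Fin n),
        inner ℝ (f' x - f' y) (x - y) ≤ L * ‖x - y‖ ^ 2),
      (∀ x y : EuclideanSpace ℝ (Fin n), ∀ α : ℝ, 0 ≤ α → α ≤ 1 →
        f (α • x + (1 - α) • y) + α * (1 - α) / (2 * L) * ‖f' x - f' y‖ ^ 2
          ≤ α * f x + (1 - α) * f y),
      (∀ x y : EuclideanSpace ℝ (Fin n), ∀ α : ℝ, 0 ≤ α → α ≤ 1 →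
        α * f x + (1 - α) * f y
          ≤ f (α • x + (1 - α) • y) + α * (1 - α) * (L / 2) * ‖x - y‖ ^ 2) ].TFAE := by
  tfae_have 1 → 2 := by
    intro h x y
    apply descent_of_bound f f' hdiff hcont L x y
    intro t ht
    have h1 := h (x + t • (y - x)) x
    have h2 : x + t • (y - x) - x = t • (y - x) := by module
    rw [h2, norm_smul, Real.norm_eq_abs, abs_of_nonneg ht.1] at h1
    have h3 := real_inner_le_norm (f' (x + t • (y - x)) - f' x) (y - x)
    nlinarith [norm_nonneg (y - x), norm_nonneg (f' (x + t • (y - x)) - f' x)]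
  tfae_have 2 → 3 := by
    intro h x y
    set a := f' x with ha
    set b := f' y with hb
    set z := y - L⁻¹ • (b - a) with hz
    have hA := grad_ineq f f' hdiff hconv x z
    have hB := h y z
    have e1 : z - x = (y - x) - L⁻¹ • (b - a) := by rw [hz]; module
    have e2 : z - y = -(L⁻¹ • (b - a)) := by rw [hz]; module
    have e3 : y - z = L⁻¹ • (b - a) := by rw [hz]; module
    rw [e1, inner_sub_right, real_inner_smul_right] at hA
    rw [e2, inner_neg_right, real_inner_smul_right, e3, norm_smul_sq] at hB
    have e4 : (inner ℝ b (b - a) : ℝ) - inner ℝ a (b - a) = ‖b - a‖ ^ 2 := by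
      rw [← inner_sub_left, real_inner_self_eq_norm_sq]
    have e5 : ‖a - b‖ = ‖b - a‖ := norm_sub_rev a b
    have hcL : L * L⁻¹ = 1 := mul_inv_cancel₀ hL.ne'
    have e6 : L / 2 * (L⁻¹ ^ 2 * ‖b - a‖ ^ 2) = L⁻¹ / 2 * ‖b - a‖ ^ 2 := by
      field_simp
    have e7 : 1 / (2 * L) * ‖a - b‖ ^ 2 = L⁻¹ / 2 * ‖b - a‖ ^ 2 := by
      rw [e5, one_div, mul_inv]; ring
    rw [e7]
    have e4c : L⁻¹ * inner ℝ b (b - a) - L⁻¹ * inner ℝ a (b - a)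
        = L⁻¹ * ‖b - a‖ ^ 2 := by rw [← mul_sub, e4]
    rw [e6] at hB
    linarith
  tfae_have 3 → 4 := by
    intro h x y
    have h1 := h x y
    have h2 := h y x
    have e1 : (inner ℝ (f' x - f' y) (x - y) : ℝ)
        = inner ℝ (f' x) (x - y) - inner ℝ (f' y) (x - y) := inner_sub_left _ _ _
    have e2 : (inner ℝ (f' x) (y - x) : ℝ) = -inner ℝ (f' x) (x - y) := by
      have : y - x = -(x - y) := by module
      rw [this, inner_neg_right]
    have e3 : (inner ℝ (f' y) (x - y) : ℝ) = -inner ℝ (f' y) (y - x) := by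
      have : x - y = -(y - x) := by module
      rw [this, inner_neg_right]
    have e4 : ‖f' y - f' x‖ = ‖f' x - f' y‖ := norm_sub_rev _ _
    rw [e2] at h1
    rw [e4] at h2
    rw [e1, e3]
    have : 1 / L * ‖f' x - f' y‖ ^ 2 = 2 * (1 / (2 * L) * ‖f' x - f' y‖ ^ 2) := by
      field_simp
    rw [this]
    linarith
  tfae_have 4 → 1 := by
    intro h x y
    have h1 := h x y
    have h2 := real_inner_le_norm (f' x - f' y) (x - y)
    rcases eq_or_lt_of_le (norm_nonneg (f' x - f' y)) with hn | hn
    · rw [← hn]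
      positivity
    · have h4 : 1 / L * ‖f' x - f' y‖ ^ 2 ≤ ‖f' x - f' y‖ * ‖x - y‖ := le_trans h1 h2
      have h3 : ‖f' x - f' y‖ ^ 2 ≤ L * (‖f' x - f' y‖ * ‖x - y‖) := by
        have h5 := mul_le_mul_of_nonneg_left h4 hL.le
        calc ‖f' x - f' y‖ ^ 2 = L * (1 / L * ‖f' x - f' y‖ ^ 2) := by field_simp
          _ ≤ L * (‖f' x - f' y‖ * ‖x - y‖) := h5
      nlinarith [h3, hn]
  tfae_have 2 → 5 := by
    intro h x y
    have h1 := h x y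
    have h2 := h y x
    have e1 : (inner ℝ (f' x - f' y) (x - y) : ℝ)
        = inner ℝ (f' x) (x - y) - inner ℝ (f' y) (x - y) := inner_sub_left _ _ _
    have e2 : (inner ℝ (f' x) (y - x) : ℝ) = -inner ℝ (f' x) (x - y) := by
      have : y - x = -(x - y) := by module
      rw [this, inner_neg_right]
    have e3 : ‖y - x‖ = ‖x - y‖ := norm_sub_rev _ _
    rw [e2] at h1
    rw [e3] at h2
    rw [e1]
    linarith
  tfae_have 5 → 2 := by
    intro h x y
    apply descent_of_bound f f' hdiff hcont L x y
    intro t ht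
    rcases ht.1.eq_or_lt with h0 | h0
    · subst h0
      simp
    · have h1 := h (x + t • (y - x)) x
      have e1 : x + t • (y - x) - x = t • (y - x) := by module
      rw [e1, real_inner_smul_right, norm_smul_sq] at h1
      have : (inner ℝ (f' (x + t • (y - x)) - f' x) (y - x) : ℝ)
          ≤ L * (t * ‖y - x‖ ^ 2) := by
        have := (mul_le_mul_iff_right₀ h0).mp (by nlinarith : t * (inner ℝ (f' (x + t • (y - x)) - f' x) (y - x) : ℝ) ≤ t * (L * (t * ‖y - x‖ ^ 2)))
        exact this
      linarith [this]
  tfae_have 2 → 7 := by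
    intro h x y α hα0 hα1
    set z := α • x + (1 - α) • y with hz
    have h1 := h z x
    have h2 := h z y
    have e1 : x - z = (1 - α) • (x - y) := by rw [hz]; module
    have e2 : y - z = -(α • (x - y)) := by rw [hz]; module
    have e3 : z - x = (1 - α) • (y - x) := by rw [hz]; module
    have e4 : z - y = α • (x - y) := by rw [hz]; module
    rw [e1, real_inner_smul_right, e3, norm_smul_sq] at h1
    rw [e2, inner_neg_right, real_inner_smul_right, e4, norm_smul_sq] at h2
    have e5 : ‖y - x‖ = ‖x - y‖ := norm_sub_rev _ _
    rw [e5] at h1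
    nlinarith [mul_le_mul_of_nonneg_left h1 hα0,
      mul_le_mul_of_nonneg_left h2 (by linarith : (0:ℝ) ≤ 1 - α)]
  tfae_have 7 → 2 := by
    intro h x y
    have hd : HasDerivAt (fun s : ℝ => -(f (x + s • (y - x))))
        (-(inner ℝ (f' x) (y - x) : ℝ)) 0 := by
      have := (lineDeriv' f f' hdiff x (y - x) 0).neg
      simp only [zero_smul, add_zero] at this
      exact this
    have hslope : ∀ t ∈ Set.Ioc (0:ℝ) 1,
        (fun s : ℝ => -(f (x + s • (y - x)))) t - (fun s : ℝ => -(f (x + s • (y - x)))) 0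
          ≤ t * (f x - f y + L / 2 * ‖x - y‖ ^ 2) + t ^ 2 * 0 := by
      intro t ht
      have h1 := h x y (1 - t) (by linarith [ht.2]) (by linarith [ht.1.le])
      have e1 : (1 - t) • x + (1 - (1 - t)) • y = x + t • (y - x) := by
        rw [sub_sub_cancel]; module
      rw [e1, sub_sub_cancel] at h1
      simp only [zero_smul, add_zero]
      have hnn : (0:ℝ) ≤ t ^ 2 * (L / 2) * ‖x - y‖ ^ 2 :=
        mul_nonneg (mul_nonneg (sq_nonneg t) (by linarith)) (sq_nonneg ‖x - y‖)
      nlinarith [h1, hnn]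
    have key := deriv_le_slope _ _ _ _ hd hslope
    linarith
  tfae_have 3 → 6 := by
    intro h x y α hα0 hα1
    set z := α • x + (1 - α) • y with hz
    have h1 := h z x
    have h2 := h z y
    have e1 : x - z = (1 - α) • (x - y) := by rw [hz]; module
    have e2 : y - z = -(α • (x - y)) := by rw [hz]; module
    rw [e1, real_inner_smul_right] at h1
    rw [e2, inner_neg_right, real_inner_smul_right] at h2
    set a := f' z - f' x with haa
    set b := f' z - f' y with hbb
    have e3 : ‖f' x - f' y‖ ^ 2 = ‖a - b‖ ^ 2 := by
      have : a - b = -(f' x - f' y) := by rw [haa, hbb]; module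
      rw [this, norm_neg]
    have expand : ‖α • a + (1 - α) • b‖ ^ 2
        = α ^ 2 * ‖a‖ ^ 2 + 2 * (α * (1 - α)) * inner ℝ a b + (1 - α) ^ 2 * ‖b‖ ^ 2 := by
      rw [norm_add_sq_real, norm_smul_sq, norm_smul_sq, real_inner_smul_left,
        real_inner_smul_right]
      ring
    have hsub : ‖a - b‖ ^ 2 = ‖a‖ ^ 2 - 2 * inner ℝ a b + ‖b‖ ^ 2 :=
      norm_sub_sq_real a b
    have hx0 : (0:ℝ) ≤ α ^ 2 * ‖a‖ ^ 2 + 2 * (α * (1 - α)) * inner ℝ a b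
        + (1 - α) ^ 2 * ‖b‖ ^ 2 := expand ▸ sq_nonneg _
    have hkey : α * (1 - α) * (‖a‖ ^ 2 - 2 * inner ℝ a b + ‖b‖ ^ 2)
        ≤ α * ‖a‖ ^ 2 + (1 - α) * ‖b‖ ^ 2 := by linarith [hx0]
    rw [e3, hsub]
    have hc : (0:ℝ) < 1 / (2 * L) := by positivity
    have H1 := mul_le_mul_of_nonneg_left h1 hα0
    have H2 := mul_le_mul_of_nonneg_left h2 (by linarith : (0:ℝ) ≤ 1 - α)
    have H3 := mul_le_mul_of_nonneg_left hkey hc.le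
    have Hsum : f z + 1 / (2 * L) * (α * ‖a‖ ^ 2 + (1 - α) * ‖b‖ ^ 2)
        ≤ α * f x + (1 - α) * f y := by linarith [H1, H2]
    have efin : α * (1 - α) / (2 * L) * (‖a‖ ^ 2 - 2 * inner ℝ a b + ‖b‖ ^ 2)
        = 1 / (2 * L) * (α * (1 - α) * (‖a‖ ^ 2 - 2 * inner ℝ a b + ‖b‖ ^ 2)) := by ring
    rw [efin]
    linarith [H3, Hsum]
  tfae_have 6 → 3 := by
    intro h x y
    have hd : HasDerivAt (fun s : ℝ => f (x + s • (y - x)))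
        (inner ℝ (f' x) (y - x) : ℝ) 0 := by
      have := lineDeriv' f f' hdiff x (y - x) 0
      simpa using this
    have key := deriv_le_slope (fun s : ℝ => f (x + s • (y - x))) _
      (f y - f x - 1 / (2 * L) * ‖f' x - f' y‖ ^ 2)
      (1 / (2 * L) * ‖f' x - f' y‖ ^ 2) hd ?_
    · linarith
    · intro t ht
      have h1 := h y x t ht.1.le ht.2
      have e1 : t • y + (1 - t) • x = x + t • (y - x) := by module
      have e2 : ‖f' y - f' x‖ = ‖f' x - f' y‖ := norm_sub_rev _ _
      rw [e1, e2] at h1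
      have e0 : x + (0:ℝ) • (y - x) = x := by module
      simp only [e0]
      have hL2 : (0:ℝ) < 2 * L := by linarith
      have expand : t * (1 - t) / (2 * L) * ‖f' x - f' y‖ ^ 2
          = t * (1 / (2 * L) * ‖f' x - f' y‖ ^ 2)
            - t ^ 2 * (1 / (2 * L) * ‖f' x - f' y‖ ^ 2) := by
        field_simp
      linarith [h1, expand.symm.le]
  tfae_finish
end
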